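/- arXiv:1102.2641 — 2 statements merged into one kernel-verified Lean document; each statement's English description precedes it below -/
import Mathlib

section
/- Let a > 1/2 with a ≠ 1, set α = 1/(1 + log₂ a), let p be a probability vector on n ≥ 2 symbols, and let j be any index. Set p̂_j = p_j^α·2^((α−1)·H_α(p)). Then o^{log₂ a}(p̂_j) ≤ L_a^opt(p) − H_α(p), and for every positive integer λ, L_a^opt(p) − H_α(p) < λ + (1/(log₂ a))·log₂( p̂_j^(1+log₂ a) + 2^(log₂ a)·(1−p̂_j)^(1+log₂ a)·(2^λ − 1)^(−log₂ a) ), where o^d(q) = inf over positive integers μ of ( μ + (1/d)·log₂( q^(1+d) + (1−q)^(1+d)·(2^μ − 1)^(−d) ) ). -/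
open Real Finset

set_option maxHeartbeats 1600000

/-- A valid codeword-length vector: all lengths at least 1 and the Kraft inequality holds. -/
def IsCode (n : ℕ) (l : Fin n → ℕ) : Prop :=
  (∀ i, 1 ≤ l i) ∧ ∑ i, (2 : ℝ) ^ (-(l i : ℝ)) ≤ 1

/-- Exponential average length `L_a(l,p)`. -/
noncomputable def expLength (n : ℕ) (a : ℝ) (l : Fin n → ℕ) (p : Fin n → ℝ) : ℝ :=
  Real.logb a (∑ i, p i * a ^ (l i : ℝ))

/-- Optimal exponential average length `L_a^opt(p)`. -/
noncomputable def expLengthOpt (n : ℕ) (a : ℝ) (p : Fin n → ℝ) : ℝ :=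
  sInf { r | ∃ l : Fin n → ℕ, IsCode n l ∧ r = expLength n a l p }

/-- Rényi entropy of order `α`. -/
noncomputable def renyiEntropy (n : ℕ) (α : ℝ) (p : Fin n → ℝ) : ℝ :=
  (1 / (1 - α)) * Real.logb 2 (∑ i, (p i) ^ α)

/-- The lower-bound function `o^d(q)`. -/
noncomputable def lowerBound (d q : ℝ) : ℝ :=
  sInf { r | ∃ μ : ℕ, 1 ≤ μ ∧
    r = (μ : ℝ) + (1 / d) * Real.logb 2
      (q ^ (1 + d) + (1 - q) ^ (1 + d) * ((2 : ℝ) ^ (μ : ℝ) - 1) ^ (-d)) }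

lemma holder_d_pos {ι : Type*} (s : Finset ι) (u t : ι → ℝ)
    (hu : ∀ i ∈ s, 0 ≤ u i) (ht : ∀ i ∈ s, 0 < t i) {d : ℝ} (hd : 0 < d) :
    (∑ i ∈ s, u i) ^ (1 + d) * (∑ i ∈ s, t i) ^ (-d) ≤
      ∑ i ∈ s, u i ^ (1 + d) * t i ^ (-d) := by
  have h1d : (0:ℝ) < 1 + d := by linarith
  have h1d' : (1:ℝ) + d ≠ 0 := by linarith
  rcases s.eq_empty_or_nonempty with rfl | hs
  · simp [Real.zero_rpow h1d']
  have hT : 0 < ∑ i ∈ s, t i := Finset.sum_pos ht hs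
  have hA : 0 ≤ ∑ i ∈ s, u i ^ (1 + d) * t i ^ (-d) := by
    apply Finset.sum_nonneg
    intro i hi
    have h1 := hu i hi
    have h2 := (ht i hi).le
    positivity
  have hpq : Real.HolderConjugate (1 + d) ((1 + d) / d) := by
    rw [Real.holderConjugate_iff]; constructor
    · linarith
    · rw [inv_div]
      field_simp
  have key := Real.inner_le_Lp_mul_Lq s
      (fun i => u i * t i ^ (-(d / (1 + d)))) (fun i => t i ^ (d / (1 + d))) hpq
  try simp only [] at key
  have e1 : ∑ i ∈ s, (u i * t i ^ (-(d / (1 + d)))) * t i ^ (d / (1 + d)) = ∑ i ∈ s, u i := by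
    refine Finset.sum_congr rfl fun i hi => ?_
    rw [mul_assoc, ← Real.rpow_add (ht i hi)]
    simp
  have e2 : ∑ i ∈ s, |u i * t i ^ (-(d / (1 + d)))| ^ (1 + d)
      = ∑ i ∈ s, u i ^ (1 + d) * t i ^ (-d) := by
    refine Finset.sum_congr rfl fun i hi => ?_
    have htn : (0:ℝ) ≤ t i ^ (-(d / (1 + d))) := (Real.rpow_nonneg (ht i hi).le _)
    rw [abs_of_nonneg (mul_nonneg (hu i hi) htn),
      Real.mul_rpow (hu i hi) htn, ← Real.rpow_mul (ht i hi).le,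
      show (-(d / (1 + d))) * (1 + d) = -d by field_simp]
  have e3 : ∑ i ∈ s, |t i ^ (d / (1 + d))| ^ ((1 + d) / d) = ∑ i ∈ s, t i := by
    refine Finset.sum_congr rfl fun i hi => ?_
    rw [abs_of_nonneg (Real.rpow_nonneg (ht i hi).le _), ← Real.rpow_mul (ht i hi).le,
      show d / (1 + d) * ((1 + d) / d) = 1 by field_simp, Real.rpow_one]
  rw [e1, e2, e3] at key
  have hq : 1 / ((1 + d) / d) = d / (1 + d) := by rw [one_div, inv_div]
  rw [hq] at key
  have hu' : 0 ≤ ∑ i ∈ s, u i := Finset.sum_nonneg hu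
  have key2 : (∑ i ∈ s, u i) ^ (1 + d) ≤
      (∑ i ∈ s, u i ^ (1 + d) * t i ^ (-d)) * (∑ i ∈ s, t i) ^ d := by
    calc (∑ i ∈ s, u i) ^ (1 + d)
        ≤ ((∑ i ∈ s, u i ^ (1 + d) * t i ^ (-d)) ^ (1 / (1 + d)) *
            (∑ i ∈ s, t i) ^ (d / (1 + d))) ^ (1 + d) :=
          Real.rpow_le_rpow hu' key h1d.le
      _ = _ := by
          rw [Real.mul_rpow (Real.rpow_nonneg hA _) (Real.rpow_nonneg hT.le _),
            ← Real.rpow_mul hA, ← Real.rpow_mul hT.le, one_div,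
            inv_mul_cancel₀ h1d', Real.rpow_one, div_mul_cancel₀ _ h1d']
  calc (∑ i ∈ s, u i) ^ (1 + d) * (∑ i ∈ s, t i) ^ (-d)
      ≤ ((∑ i ∈ s, u i ^ (1 + d) * t i ^ (-d)) * (∑ i ∈ s, t i) ^ d) * (∑ i ∈ s, t i) ^ (-d) :=
        mul_le_mul_of_nonneg_right key2 (Real.rpow_nonneg hT.le _)
    _ = ∑ i ∈ s, u i ^ (1 + d) * t i ^ (-d) := by
        rw [mul_assoc, ← Real.rpow_add hT]
        simp

lemma holder_d_neg {ι : Type*} (s : Finset ι) (u t : ι → ℝ)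
    (hu : ∀ i ∈ s, 0 ≤ u i) (ht : ∀ i ∈ s, 0 ≤ t i) {d : ℝ} (hd1 : -1 < d) (hd : d < 0) :
    ∑ i ∈ s, u i ^ (1 + d) * t i ^ (-d) ≤
      (∑ i ∈ s, u i) ^ (1 + d) * (∑ i ∈ s, t i) ^ (-d) := by
  have h1d : (0:ℝ) < 1 + d := by linarith
  have h1d' : (1:ℝ) + d ≠ 0 := by linarith
  have hpq : Real.HolderConjugate (1 / (1 + d)) (1 / (-d)) := by
    rw [Real.holderConjugate_iff]; constructor
    · rw [lt_div_iff₀ h1d]; linarith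
    · rw [one_div, one_div, inv_inv, inv_inv]; ring
  have key := Real.inner_le_Lp_mul_Lq s
      (fun i => u i ^ (1 + d)) (fun i => t i ^ (-d)) hpq
  try simp only [] at key
  have e2 : ∑ i ∈ s, |u i ^ (1 + d)| ^ (1 / (1 + d)) = ∑ i ∈ s, u i := by
    refine Finset.sum_congr rfl fun i hi => ?_
    rw [abs_of_nonneg (Real.rpow_nonneg (hu i hi) _), ← Real.rpow_mul (hu i hi),
      mul_one_div, div_self h1d', Real.rpow_one]
  have e3 : ∑ i ∈ s, |t i ^ (-d)| ^ (1 / (-d)) = ∑ i ∈ s, t i := by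
    refine Finset.sum_congr rfl fun i hi => ?_
    rw [abs_of_nonneg (Real.rpow_nonneg (ht i hi) _), ← Real.rpow_mul (ht i hi),
      mul_one_div, div_self (by linarith), Real.rpow_one]
  rw [e2, e3] at key
  have hq1 : 1 / (1 / (1 + d)) = 1 + d := by rw [one_div_one_div]
  have hq2 : 1 / (1 / (-d)) = -d := by rw [one_div_one_div]
  rw [hq1, hq2] at key
  exact key

theorem stmt_18 (n : ℕ) (hn : 2 ≤ n) (a : ℝ) (ha : 1 / 2 < a) (ha1 : a ≠ 1)
    (p : Fin n → ℝ) (hp : ∀ i, 0 < p i) (hpsum : ∑ i, p i = 1) (j : Fin n) :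
    let α := 1 / (1 + Real.logb 2 a)
    let phatj := (p j) ^ α * (2 : ℝ) ^ ((α - 1) * renyiEntropy n α p)
    lowerBound (Real.logb 2 a) phatj ≤ expLengthOpt n a p - renyiEntropy n α p ∧
    ∀ lam : ℕ, 1 ≤ lam →
      expLengthOpt n a p - renyiEntropy n α p < (lam : ℝ) +
        (1 / Real.logb 2 a) * Real.logb 2
          (phatj ^ (1 + Real.logb 2 a) +
            (2 : ℝ) ^ (Real.logb 2 a) * (1 - phatj) ^ (1 + Real.logb 2 a) *
              ((2 : ℝ) ^ (lam : ℝ) - 1) ^ (-(Real.logb 2 a))) := by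
  intro α phatj
  have hα' : α = 1 / (1 + Real.logb 2 a) := rfl
  have hphat' : phatj = (p j) ^ α * (2 : ℝ) ^ ((α - 1) * renyiEntropy n α p) := rfl
  have ha0 : (0:ℝ) < a := by linarith
  set d := Real.logb 2 a with hd_def
  have h2d : (2:ℝ) ^ d = a := Real.rpow_logb (by norm_num) (by norm_num) ha0
  have hd0 : d ≠ 0 := by
    intro h
    rw [h, Real.rpow_zero] at h2d
    exact ha1 h2d.symm
  have hd1 : (-1:ℝ) < d := by
    have h12 : Real.logb 2 ((2:ℝ)⁻¹) = -1 := by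
      rw [Real.logb_inv, Real.logb_self_eq_one one_lt_two]
    calc (-1:ℝ) = Real.logb 2 ((2:ℝ)⁻¹) := h12.symm
      _ < d := by
          rw [hd_def]
          exact Real.logb_lt_logb one_lt_two (by norm_num) (by rw [← one_div]; exact ha)
  have h1d : (0:ℝ) < 1 + d := by linarith
  have h1d' : (1:ℝ) + d ≠ 0 := ne_of_gt h1d
  have hα : α = 1 / (1 + d) := hα'
  have hα0 : 0 < α := by rw [hα]; positivity
  have hαd : α * (1 + d) = 1 := by rw [hα]; field_simp
  have hα1 : 1 - α = d / (1 + d) := by rw [hα]; field_simp; ring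
  -- escort quantities
  set S := ∑ i, (p i) ^ α with hS_def
  have hS0 : 0 < S :=
    Finset.sum_pos (fun i _ => Real.rpow_pos_of_pos (hp i) α) ⟨j, Finset.mem_univ j⟩
  set T := ∑ i ∈ Finset.univ.erase j, (p i) ^ α with hT_def
  have hST : (p j) ^ α + T = S :=
    Finset.add_sum_erase Finset.univ (fun i => (p i) ^ α) (Finset.mem_univ j)
  have herase_ne : (Finset.univ.erase j).Nonempty := by
    rw [← Finset.card_pos, Finset.card_erase_of_mem (Finset.mem_univ j), Finset.card_univ,
      Fintype.card_fin]
    omega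
  have hT0 : 0 < T :=
    Finset.sum_pos (fun i _ => Real.rpow_pos_of_pos (hp i) α) herase_ne
  have hH : renyiEntropy n α p = ((1+d)/d) * Real.logb 2 S := by
    rw [renyiEntropy, ← hS_def, hα1, one_div_div]
  have hq : phatj = (p j) ^ α / S := by
    have h1 : (α - 1) * renyiEntropy n α p = - Real.logb 2 S := by
      rw [hH]
      have : α - 1 = -(d/(1+d)) := by rw [← hα1]; ring
      rw [this]
      field_simp
    rw [hphat', h1, Real.rpow_neg (by norm_num : (0:ℝ) ≤ 2),
      Real.rpow_logb (by norm_num) (by norm_num) hS0, div_eq_mul_inv]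
  have hq0 : 0 < phatj := by
    rw [hq]
    exact div_pos (Real.rpow_pos_of_pos (hp j) α) hS0
  have hqS : phatj * S = (p j) ^ α := by
    rw [hq]
    field_simp
  have h1q : 1 - phatj = T / S := by
    rw [hq, eq_div_iff hS0.ne', sub_mul, one_mul, div_mul_cancel₀ _ hS0.ne']
    linarith
  have hq1 : phatj < 1 := by
    rw [hq, div_lt_one hS0]
    nlinarith [Real.rpow_pos_of_pos (hp j) α]
  have h1q0 : 0 < 1 - phatj := by
    rw [h1q]; positivity
  -- the G function and redundancy identity
  have hGdef : ∀ l : Fin n → ℕ,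
      (∑ i, p i * a ^ (l i : ℝ)) = ∑ i, p i * (2:ℝ) ^ (d * (l i : ℝ)) := by
    intro l
    refine Finset.sum_congr rfl fun i _ => ?_
    rw [← h2d, ← Real.rpow_mul (by norm_num : (0:ℝ) ≤ 2)]
  have hG0 : ∀ l : Fin n → ℕ, 0 < ∑ i, p i * (2:ℝ) ^ (d * (l i : ℝ)) := by
    intro l
    apply Finset.sum_pos (fun i _ => ?_) ⟨j, Finset.mem_univ j⟩
    exact mul_pos (hp i) (Real.rpow_pos_of_pos (by norm_num) _)
  have hlog2 : Real.log 2 ≠ 0 := (Real.log_pos one_lt_two).ne'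
  have hloga : Real.log a ≠ 0 := by
    intro h
    apply hd0
    rw [hd_def, Real.logb, h, zero_div]
  have hexp_eq : ∀ l : Fin n → ℕ,
      expLength n a l p = (1/d) * Real.logb 2 (∑ i, p i * (2:ℝ) ^ (d * (l i : ℝ))) := by
    intro l
    rw [expLength, hGdef l, Real.logb, Real.logb, hd_def, Real.logb]
    field_simp
  have hred : ∀ l : Fin n → ℕ,
      expLength n a l p - renyiEntropy n α p
        = (1/d) * (Real.logb 2 (∑ i, p i * (2:ℝ) ^ (d * (l i : ℝ))) - (1+d) * Real.logb 2 S) := by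
    intro l
    rw [hexp_eq l, hH]
    ring
  -- basic rpow identities
  have i1 : S^(1+d) * phatj^(1+d) = p j := by
    rw [← Real.mul_rpow hS0.le hq0.le, mul_comm, hqS, ← Real.rpow_mul (hp j).le, hαd,
      Real.rpow_one]
  have i2 : S^(1+d) * (1-phatj)^(1+d) = T^(1+d) := by
    rw [← Real.mul_rpow hS0.le h1q0.le, h1q, mul_div_cancel₀ _ hS0.ne']
  have i3 : ∀ μ : ℕ, 1 ≤ μ →
      (2:ℝ)^(d*(μ:ℝ)) * ((2:ℝ)^(μ:ℝ) - 1)^(-d) = (1 - (2:ℝ)^(-(μ:ℝ)))^(-d) := by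
    intro μ hμ
    have h2μ : (1:ℝ) < (2:ℝ)^(μ:ℝ) := by
      have : (2:ℝ)^(0:ℝ) < (2:ℝ)^(μ:ℝ) :=
        Real.rpow_lt_rpow_of_exponent_lt one_lt_two (by exact_mod_cast Nat.pos_of_ne_zero (by omega))
      simpa using this
    have e : (1:ℝ) - (2:ℝ)^(-(μ:ℝ)) = ((2:ℝ)^(μ:ℝ) - 1) * (2:ℝ)^(-(μ:ℝ)) := by
      rw [sub_mul, ← Real.rpow_add (by norm_num : (0:ℝ) < 2)]
      simp
    rw [e, Real.mul_rpow (by linarith) (Real.rpow_nonneg (by norm_num) _),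
      ← Real.rpow_mul (by norm_num : (0:ℝ) ≤ 2), show -(μ:ℝ) * (-d) = d * (μ:ℝ) by ring]
    ring
  have hM : ∀ μ : ℕ, 1 ≤ μ →
      (2:ℝ)^(d*(μ:ℝ)) * S^(1+d) *
        (phatj ^ (1+d) + (1-phatj)^(1+d) * ((2:ℝ)^(μ:ℝ) - 1)^(-d))
      = p j * (2:ℝ)^(d*(μ:ℝ)) + T^(1+d) * (1 - (2:ℝ)^(-(μ:ℝ)))^(-d) := by
    intro μ hμ
    have i3' := i3 μ hμ
    linear_combination (2:ℝ)^(d*(μ:ℝ)) * i1 +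
      (2:ℝ)^(d*(μ:ℝ)) * ((2:ℝ)^(μ:ℝ) - 1)^(-d) * i2 + T^(1+d) * i3'
  have h2μ_gt : ∀ μ : ℕ, 1 ≤ μ → (1:ℝ) < (2:ℝ)^(μ:ℝ) := by
    intro μ hμ
    have : (2:ℝ)^(0:ℝ) < (2:ℝ)^(μ:ℝ) :=
      Real.rpow_lt_rpow_of_exponent_lt one_lt_two
        (by exact_mod_cast Nat.pos_of_ne_zero (by omega))
    simpa using this
  have hinner_pos : ∀ μ : ℕ, 1 ≤ μ →
      0 < phatj ^ (1+d) + (1-phatj)^(1+d) * ((2:ℝ)^(μ:ℝ) - 1)^(-d) := by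
    intro μ hμ
    have h1 := Real.rpow_pos_of_pos hq0 (1+d)
    have h2 := Real.rpow_pos_of_pos h1q0 (1+d)
    have h3 := Real.rpow_pos_of_pos (by linarith [h2μ_gt μ hμ] : (0:ℝ) < (2:ℝ)^(μ:ℝ) - 1) (-d)
    positivity
  have hc02 : ∀ μ : ℕ, 1 ≤ μ → 0 < 1 - (2:ℝ)^(-(μ:ℝ)) := by
    intro μ hμ
    have hμR : (1:ℝ) ≤ (μ:ℝ) := by exact_mod_cast hμ
    have : (2:ℝ)^(-(μ:ℝ)) < (2:ℝ)^(0:ℝ) :=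
      Real.rpow_lt_rpow_of_exponent_lt one_lt_two (by linarith)
    simp only [Real.rpow_zero] at this
    linarith
  have claimA : ∀ l : Fin n → ℕ, IsCode n l →
      ((l j : ℝ) + (1/d) * Real.logb 2
        (phatj ^ (1 + d) + (1 - phatj) ^ (1 + d) * ((2:ℝ) ^ ((l j : ℕ) : ℝ) - 1) ^ (-d)))
      ≤ expLength n a l p - renyiEntropy n α p := by
    intro l hl
    obtain ⟨hl1, hlk⟩ := hl
    have hμ1 : 1 ≤ l j := hl1 j
    have hc := hc02 (l j) hμ1
    have hinner := hinner_pos (l j) hμ1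
    have hkraft' : ∑ i ∈ Finset.univ.erase j, (2:ℝ)^(-(l i : ℝ)) ≤ 1 - (2:ℝ)^(-(l j:ℝ)) := by
      have hsplit := Finset.add_sum_erase Finset.univ
        (fun i => (2:ℝ)^(-(l i : ℝ))) (Finset.mem_univ j)
      try simp only [] at hsplit
      linarith [hlk]
    have ht_pos : ∀ i ∈ Finset.univ.erase j, (0:ℝ) < (2:ℝ)^(-(l i : ℝ)) :=
      fun i _ => Real.rpow_pos_of_pos (by norm_num) _
    have hsum_t_pos : 0 < ∑ i ∈ Finset.univ.erase j, (2:ℝ)^(-(l i : ℝ)) :=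
      Finset.sum_pos ht_pos herase_ne
    have hW : ∑ i ∈ Finset.univ.erase j, ((p i)^α) ^ (1+d) * ((2:ℝ)^(-(l i : ℝ))) ^ (-d)
        = ∑ i ∈ Finset.univ.erase j, p i * (2:ℝ)^(d * (l i : ℝ)) := by
      refine Finset.sum_congr rfl fun i _ => ?_
      rw [← Real.rpow_mul (hp i).le, hαd, Real.rpow_one,
        ← Real.rpow_mul (by norm_num : (0:ℝ) ≤ 2),
        show -(l i : ℝ) * (-d) = d * (l i : ℝ) by ring]
    have hGsplit : (∑ i, p i * (2:ℝ)^(d * (l i : ℝ)))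
        = p j * (2:ℝ)^(d * ((l j : ℕ):ℝ))
          + ∑ i ∈ Finset.univ.erase j, p i * (2:ℝ)^(d * (l i : ℝ)) :=
      (Finset.add_sum_erase Finset.univ
        (fun i => p i * (2:ℝ)^(d * (l i : ℝ))) (Finset.mem_univ j)).symm
    have hMeq := hM (l j) hμ1
    have hXpos : 0 < (2:ℝ)^(d*((l j:ℕ):ℝ)) * S^(1+d) *
        (phatj ^ (1+d) + (1-phatj)^(1+d) * ((2:ℝ)^((l j:ℕ):ℝ) - 1)^(-d)) := by
      have h1 := Real.rpow_pos_of_pos (show (0:ℝ)<2 by norm_num) (d*((l j:ℕ):ℝ))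
      have hSp := Real.rpow_pos_of_pos hS0 (1+d)
      positivity
    have hlogX : Real.logb 2 ((2:ℝ)^(d*((l j:ℕ):ℝ)) * S^(1+d) *
          (phatj ^ (1+d) + (1-phatj)^(1+d) * ((2:ℝ)^((l j:ℕ):ℝ) - 1)^(-d)))
        = d*((l j:ℕ):ℝ) + (1+d) * Real.logb 2 S +
          Real.logb 2 (phatj ^ (1+d) + (1-phatj)^(1+d) * ((2:ℝ)^((l j:ℕ):ℝ) - 1)^(-d)) := by
      rw [Real.logb_mul (by positivity) (ne_of_gt hinner),
        Real.logb_mul (by positivity) (by positivity),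
        Real.logb_rpow (by norm_num : (0:ℝ) < 2) (by norm_num : (2:ℝ) ≠ 1),
        Real.logb_rpow_eq_mul_logb_of_pos hS0]
    have hXle : (1/d) * Real.logb 2 ((2:ℝ)^(d*((l j:ℕ):ℝ)) * S^(1+d) *
          (phatj ^ (1+d) + (1-phatj)^(1+d) * ((2:ℝ)^((l j:ℕ):ℝ) - 1)^(-d)))
        ≤ (1/d) * Real.logb 2 (∑ i, p i * (2:ℝ)^(d * (l i : ℝ))) := by
      rcases hd0.lt_or_gt with hdn | hdp
      · have hh := holder_d_neg (Finset.univ.erase j) (fun i => (p i)^α)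
          (fun i => (2:ℝ)^(-(l i : ℝ))) (fun i _ => (Real.rpow_pos_of_pos (hp i) α).le)
          (fun i hi => (ht_pos i hi).le) hd1 hdn
        try simp only [] at hh
        have h2 : ((∑ i ∈ Finset.univ.erase j, (2:ℝ)^(-(l i : ℝ))))^(-d)
            ≤ (1 - (2:ℝ)^(-(l j:ℝ)))^(-d) :=
          Real.rpow_le_rpow hsum_t_pos.le hkraft' (by linarith)
        have h3 : ∑ i ∈ Finset.univ.erase j, p i * (2:ℝ)^(d * (l i : ℝ))
            ≤ T^(1+d) * (1 - (2:ℝ)^(-(l j:ℝ)))^(-d) := by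
          rw [← hW]
          refine hh.trans ?_
          rw [← hT_def]
          exact mul_le_mul_of_nonneg_left h2 (Real.rpow_nonneg hT0.le _)
        have hGle : (∑ i, p i * (2:ℝ)^(d * (l i : ℝ)))
            ≤ (2:ℝ)^(d*((l j:ℕ):ℝ)) * S^(1+d) *
              (phatj ^ (1+d) + (1-phatj)^(1+d) * ((2:ℝ)^((l j:ℕ):ℝ) - 1)^(-d)) := by
          rw [hGsplit, hMeq]
          linarith
        exact mul_le_mul_of_nonpos_left
          (Real.logb_le_logb_of_le one_lt_two (hG0 l) hGle)
          (le_of_lt (one_div_neg.mpr hdn))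
      · have hh := holder_d_pos (Finset.univ.erase j) (fun i => (p i)^α)
          (fun i => (2:ℝ)^(-(l i : ℝ))) (fun i _ => (Real.rpow_pos_of_pos (hp i) α).le)
          (fun i hi => ht_pos i hi) hdp
        try simp only [] at hh
        have h2 : (1 - (2:ℝ)^(-(l j:ℝ)))^(-d)
            ≤ ((∑ i ∈ Finset.univ.erase j, (2:ℝ)^(-(l i : ℝ))))^(-d) :=
          Real.rpow_le_rpow_of_nonpos hsum_t_pos hkraft' (by linarith)
        have h3 : T^(1+d) * (1 - (2:ℝ)^(-(l j:ℝ)))^(-d)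
            ≤ ∑ i ∈ Finset.univ.erase j, p i * (2:ℝ)^(d * (l i : ℝ)) := by
          rw [← hW]
          have hh2 : T ^ (1+d) * (∑ i ∈ Finset.univ.erase j, (2:ℝ)^(-(l i : ℝ)))^(-d)
              ≤ ∑ i ∈ Finset.univ.erase j, ((p i)^α) ^ (1+d) * ((2:ℝ)^(-(l i : ℝ))) ^ (-d) := by
            rw [hT_def]
            exact hh
          calc T^(1+d) * (1 - (2:ℝ)^(-(l j:ℝ)))^(-d)
              ≤ T^(1+d) * (∑ i ∈ Finset.univ.erase j, (2:ℝ)^(-(l i:ℝ)))^(-d) :=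
                mul_le_mul_of_nonneg_left h2 (Real.rpow_nonneg hT0.le _)
            _ ≤ _ := hh2
        have hGge : (2:ℝ)^(d*((l j:ℕ):ℝ)) * S^(1+d) *
              (phatj ^ (1+d) + (1-phatj)^(1+d) * ((2:ℝ)^((l j:ℕ):ℝ) - 1)^(-d))
            ≤ (∑ i, p i * (2:ℝ)^(d * (l i : ℝ))) := by
          rw [hGsplit, hMeq]
          linarith
        exact mul_le_mul_of_nonneg_left
          (Real.logb_le_logb_of_le one_lt_two hXpos hGge)
          (le_of_lt (one_div_pos.mpr hdp))
    rw [hred l]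
    rw [hlogX] at hXle
    have hsimp : (1/d) * (d*((l j:ℕ):ℝ) + (1+d)*Real.logb 2 S +
          Real.logb 2 (phatj ^ (1+d) + (1-phatj)^(1+d) * ((2:ℝ)^((l j:ℕ):ℝ) - 1)^(-d)))
        = ((l j:ℕ):ℝ) + (1/d)*((1+d)*Real.logb 2 S) + (1/d)*Real.logb 2
            (phatj ^ (1+d) + (1-phatj)^(1+d) * ((2:ℝ)^((l j:ℕ):ℝ) - 1)^(-d)) := by
      field_simp
    have hgoal : (1/d) * (Real.logb 2 (∑ i, p i * (2:ℝ)^(d * (l i : ℝ))) - (1+d)*Real.logb 2 S)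
        = (1/d)*Real.logb 2 (∑ i, p i * (2:ℝ)^(d * (l i : ℝ)))
          - (1/d)*((1+d)*Real.logb 2 S) := by ring
    rw [hgoal]
    linarith
  have hone : ∀ r ∈ {r | ∃ l : Fin n → ℕ, IsCode n l ∧ r = expLength n a l p}, (1:ℝ) ≤ r := by
    rintro r ⟨l, ⟨hl1, hlk⟩, rfl⟩
    rw [hexp_eq l]
    have hdd : (1/d)*d = 1 := by field_simp
    rcases hd0.lt_or_gt with hdn | hdp
    · have hGle : (∑ i, p i * (2:ℝ)^(d*(l i:ℝ))) ≤ (2:ℝ)^d := by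
        calc (∑ i, p i * (2:ℝ)^(d*(l i:ℝ))) ≤ ∑ i, p i * (2:ℝ)^d := by
              apply Finset.sum_le_sum
              intro i _
              apply mul_le_mul_of_nonneg_left _ (hp i).le
              apply Real.rpow_le_rpow_of_exponent_le one_le_two
              have h1 : (1:ℝ) ≤ (l i : ℝ) := by exact_mod_cast hl1 i
              nlinarith
          _ = (2:ℝ)^d := by rw [← Finset.sum_mul, hpsum, one_mul]
      have hlb : Real.logb 2 (∑ i, p i * (2:ℝ)^(d*(l i:ℝ))) ≤ d := by
        have := Real.logb_le_logb_of_le one_lt_two (hG0 l) hGle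
        rwa [Real.logb_rpow (by norm_num : (0:ℝ)<2) (by norm_num : (2:ℝ)≠1)] at this
      have := mul_le_mul_of_nonpos_left hlb (le_of_lt (one_div_neg.mpr hdn))
      linarith
    · have hGge : (2:ℝ)^d ≤ (∑ i, p i * (2:ℝ)^(d*(l i:ℝ))) := by
        calc (2:ℝ)^d = ∑ i, p i * (2:ℝ)^d := by rw [← Finset.sum_mul, hpsum, one_mul]
          _ ≤ ∑ i, p i * (2:ℝ)^(d*(l i:ℝ)) := by
              apply Finset.sum_le_sum
              intro i _
              apply mul_le_mul_of_nonneg_left _ (hp i).le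
              apply Real.rpow_le_rpow_of_exponent_le one_le_two
              have h1 : (1:ℝ) ≤ (l i : ℝ) := by exact_mod_cast hl1 i
              nlinarith
      have hlb : d ≤ Real.logb 2 (∑ i, p i * (2:ℝ)^(d*(l i:ℝ))) := by
        have := Real.logb_le_logb_of_le one_lt_two
          (Real.rpow_pos_of_pos (by norm_num) d) hGge
        rwa [Real.logb_rpow (by norm_num : (0:ℝ)<2) (by norm_num : (2:ℝ)≠1)] at this
      have := mul_le_mul_of_nonneg_left hlb (le_of_lt (one_div_pos.mpr hdp))
      linarith
  have hEne : Set.Nonempty {r | ∃ l : Fin n → ℕ, IsCode n l ∧ r = expLength n a l p} := by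
    refine ⟨expLength n a (fun _ => n) p, fun _ => n, ⟨fun _ => le_trans one_le_two hn, ?_⟩, rfl⟩
    have h2n : (2:ℝ)^(-(n:ℝ)) = ((2:ℝ)^(n:ℕ))⁻¹ := by
      rw [Real.rpow_neg (by norm_num), Real.rpow_natCast]
    rw [Finset.sum_const, Finset.card_univ, Fintype.card_fin, nsmul_eq_mul, h2n,
      ← div_eq_mul_inv, div_le_one (by positivity)]
    exact_mod_cast (@Nat.lt_two_pow_self n).le
  have hbddE : BddBelow {r | ∃ l : Fin n → ℕ, IsCode n l ∧ r = expLength n a l p} :=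
    ⟨1, fun r hr => hone r hr⟩
  have hbddLow : BddBelow {r | ∃ μ : ℕ, 1 ≤ μ ∧
      r = (μ:ℝ) + (1/d) * Real.logb 2
        (phatj ^ (1+d) + (1-phatj)^(1+d) * ((2:ℝ)^(μ:ℝ) - 1)^(-d))} := by
    rcases hd0.lt_or_gt with hdn | hdp
    · refine ⟨(1/d) * Real.logb 2 (phatj^(1+d) + (1-phatj)^(1+d)), ?_⟩
      rintro r ⟨μ, hμ, rfl⟩
      have hμR : (1:ℝ) ≤ (μ:ℝ) := by exact_mod_cast hμ
      have h2μ := h2μ_gt μ hμ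
      have hinner := hinner_pos μ hμ
      have hqp := Real.rpow_pos_of_pos hq0 (1+d)
      have h1qp := Real.rpow_pos_of_pos h1q0 (1+d)
      have hK0 : 0 < phatj^(1+d) + (1-phatj)^(1+d) := by positivity
      have hb1 : phatj^(1+d) ≤ phatj^(1+d) * (2:ℝ)^((-d)*(μ:ℝ)) := by
        nth_rewrite 1 [← mul_one (phatj^(1+d))]
        apply mul_le_mul_of_nonneg_left _ hqp.le
        calc (1:ℝ) = (2:ℝ)^(0:ℝ) := by rw [Real.rpow_zero]
          _ ≤ (2:ℝ)^((-d)*(μ:ℝ)) :=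
            Real.rpow_le_rpow_of_exponent_le one_le_two (by nlinarith)
      have hb2 : (1-phatj)^(1+d) * ((2:ℝ)^(μ:ℝ)-1)^(-d)
          ≤ (1-phatj)^(1+d) * (2:ℝ)^((-d)*(μ:ℝ)) := by
        apply mul_le_mul_of_nonneg_left _ h1qp.le
        have h5 : ((2:ℝ)^(μ:ℝ)-1)^(-d) ≤ ((2:ℝ)^(μ:ℝ))^(-d) :=
          Real.rpow_le_rpow (by linarith) (by linarith) (by linarith)
        refine h5.trans (le_of_eq ?_)
        rw [← Real.rpow_mul (by norm_num : (0:ℝ) ≤ 2)]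
        ring_nf
      have hle : phatj^(1+d) + (1-phatj)^(1+d)*((2:ℝ)^(μ:ℝ)-1)^(-d)
          ≤ (phatj^(1+d) + (1-phatj)^(1+d)) * (2:ℝ)^((-d)*(μ:ℝ)) := by
        rw [add_mul]
        linarith
      have hlog := Real.logb_le_logb_of_le one_lt_two hinner hle
      rw [Real.logb_mul (ne_of_gt hK0) (by positivity),
        Real.logb_rpow (by norm_num : (0:ℝ)<2) (by norm_num : (2:ℝ)≠1)] at hlog
      have hmul := mul_le_mul_of_nonpos_left hlog (le_of_lt (one_div_neg.mpr hdn))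
      have hsimp : (1/d)*(Real.logb 2 (phatj^(1+d)+(1-phatj)^(1+d)) + (-d)*(μ:ℝ))
          = (1/d)*Real.logb 2 (phatj^(1+d)+(1-phatj)^(1+d)) - (μ:ℝ) := by
        field_simp
        ring
      linarith
    · refine ⟨1 + (1/d) * Real.logb 2 (phatj^(1+d)), ?_⟩
      rintro r ⟨μ, hμ, rfl⟩
      have hinner := hinner_pos μ hμ
      have hμR : (1:ℝ) ≤ (μ:ℝ) := by exact_mod_cast hμ
      have h2μ := h2μ_gt μ hμ
      have h1qp := Real.rpow_pos_of_pos h1q0 (1+d)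
      have hRp := Real.rpow_pos_of_pos (show (0:ℝ) < (2:ℝ)^(μ:ℝ)-1 by linarith) (-d)
      have hb : phatj^(1+d) ≤ phatj ^ (1+d) + (1-phatj)^(1+d) * ((2:ℝ)^(μ:ℝ) - 1)^(-d) := by
        nlinarith
      have hlog := Real.logb_le_logb_of_le one_lt_two (Real.rpow_pos_of_pos hq0 _) hb
      have hmul := mul_le_mul_of_nonneg_left hlog (le_of_lt (one_div_pos.mpr hdp))
      linarith
  constructor
  · rw [le_sub_iff_add_le]
    have hEq : expLengthOpt n a p
        = sInf {r | ∃ l : Fin n → ℕ, IsCode n l ∧ r = expLength n a l p} := rfl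
    rw [hEq]
    apply le_csInf hEne
    rintro r ⟨l, hcode, rfl⟩
    have h1 := claimA l hcode
    have h2 : lowerBound d phatj ≤ (l j : ℝ) + (1/d) * Real.logb 2
        (phatj ^ (1+d) + (1-phatj)^(1+d) * ((2:ℝ)^((l j : ℕ):ℝ) - 1)^(-d)) := by
      have hLB : lowerBound d phatj = sInf {r | ∃ μ : ℕ, 1 ≤ μ ∧
          r = (μ:ℝ) + (1/d) * Real.logb 2
            (phatj ^ (1+d) + (1-phatj)^(1+d) * ((2:ℝ)^(μ:ℝ) - 1)^(-d))} := rfl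
      rw [hLB]
      exact csInf_le hbddLow ⟨l j, hcode.1 j, rfl⟩
    linarith
  · intro lam hlam
    have hlamR : (1:ℝ) ≤ (lam:ℝ) := by exact_mod_cast hlam
    set c := 1 - (2:ℝ)^(-(lam:ℝ)) with hc_def
    have hclam : 0 < c := hc02 lam hlam
    have hc1 : c < 1 := by
      have : (0:ℝ) < (2:ℝ)^(-(lam:ℝ)) := Real.rpow_pos_of_pos (by norm_num) _
      rw [hc_def]
      linarith
    have hxpos : ∀ i ∈ Finset.univ.erase j, 0 < Real.logb 2 (T / (c * (p i)^α)) := by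
      intro i hi
      apply Real.logb_pos one_lt_two
      rw [one_lt_div (mul_pos hclam (Real.rpow_pos_of_pos (hp i) α))]
      have h1 : (p i)^α ≤ T :=
        Finset.single_le_sum (f := fun i => (p i)^α)
          (fun i _ => (Real.rpow_pos_of_pos (hp i) α).le) hi
      nlinarith [Real.rpow_pos_of_pos (hp i) α]
    set l : Fin n → ℕ :=
      fun i => if i = j then lam else ⌈Real.logb 2 (T / (c * (p i)^α))⌉₊ with hl_def
    have hlj : l j = lam := by simp [hl_def]
    have hlne : ∀ i ∈ Finset.univ.erase j, l i = ⌈Real.logb 2 (T / (c * (p i)^α))⌉₊ := by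
      intro i hi
      simp [hl_def, (Finset.mem_erase.mp hi).1]
    have hl1 : ∀ i, 1 ≤ l i := by
      intro i
      by_cases h : i = j
      · rw [hl_def]
        simp [h, hlam]
      · rw [hl_def]
        simp only [if_neg h]
        exact Nat.one_le_ceil_iff.mpr (hxpos i (Finset.mem_erase.mpr ⟨h, Finset.mem_univ i⟩))
    have h2x : ∀ i ∈ Finset.univ.erase j,
        (2:ℝ)^(Real.logb 2 (T / (c * (p i)^α))) = T/(c * (p i)^α) := by
      intro i hi
      exact Real.rpow_logb (by norm_num) (by norm_num)
        (div_pos hT0 (mul_pos hclam (Real.rpow_pos_of_pos (hp i) α)))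
    have hkraft : ∑ i, (2:ℝ)^(-(l i:ℝ)) ≤ 1 := by
      have hsplit := Finset.add_sum_erase Finset.univ
        (fun i => (2:ℝ)^(-(l i:ℝ))) (Finset.mem_univ j)
      try simp only [] at hsplit
      rw [← hsplit, hlj]
      have hbound : ∑ i ∈ Finset.univ.erase j, (2:ℝ)^(-(l i:ℝ)) ≤ c := by
        have hpt : ∀ i ∈ Finset.univ.erase j, (2:ℝ)^(-(l i:ℝ)) ≤ c * (p i)^α / T := by
          intro i hi
          have h1 : (2:ℝ)^(-(l i:ℝ)) ≤ (2:ℝ)^(-(Real.logb 2 (T / (c * (p i)^α)))) := by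
            apply Real.rpow_le_rpow_of_exponent_le one_le_two
            have h2 := Nat.le_ceil (Real.logb 2 (T / (c * (p i)^α)))
            rw [hlne i hi]
            linarith
          have h2 : (2:ℝ)^(-(Real.logb 2 (T / (c * (p i)^α)))) = c * (p i)^α / T := by
            rw [Real.rpow_neg (by norm_num), h2x i hi, inv_div]
          rw [h2] at h1
          exact h1
        calc ∑ i ∈ Finset.univ.erase j, (2:ℝ)^(-(l i:ℝ))
            ≤ ∑ i ∈ Finset.univ.erase j, c * (p i)^α / T := Finset.sum_le_sum hpt
          _ = c := by
              rw [← Finset.sum_div, ← Finset.mul_sum, ← hT_def,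
                mul_div_assoc, div_self hT0.ne', mul_one]
      linarith
    have hcode : IsCode n l := ⟨hl1, hkraft⟩
    have i3' := i3 lam hlam
    have i4 : (T/c)^d * T = T^(1+d) * c^(-d) := by
      have h5 : T^d * T = T^(1+d) := by
        nth_rewrite 2 [← Real.rpow_one T]
        rw [← Real.rpow_add hT0]
        ring_nf
      rw [Real.div_rpow hT0.le hclam.le, Real.rpow_neg hclam.le, div_eq_mul_inv, ← h5]
      ring
    have hM2 : (2:ℝ)^(d*(lam:ℝ)) * S^(1+d) *
        (phatj^(1+d) + (2:ℝ)^d * (1-phatj)^(1+d) * ((2:ℝ)^(lam:ℝ)-1)^(-d))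
        = p j * (2:ℝ)^(d*(lam:ℝ)) + (2:ℝ)^d * ((T/c)^d * T) := by
      linear_combination (2:ℝ)^(d*(lam:ℝ)) * i1 +
        (2:ℝ)^(d*(lam:ℝ)) * (2:ℝ)^d * ((2:ℝ)^(lam:ℝ)-1)^(-d) * i2 +
        (2:ℝ)^d * T^(1+d) * i3' - (2:ℝ)^d * i4
    have hxid : ∀ i ∈ Finset.univ.erase j,
        p i * (2:ℝ)^(d*(Real.logb 2 (T / (c * (p i)^α)) + 1))
          = (2:ℝ)^d * (T/c)^d * (p i)^α := by
      intro i hi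
      have hpa := Real.rpow_pos_of_pos (hp i) α
      have e1 : (2:ℝ)^(d * (Real.logb 2 (T / (c * (p i)^α)) + 1))
          = (T/(c*(p i)^α))^d * (2:ℝ)^d := by
        rw [mul_add, mul_one, Real.rpow_add (by norm_num : (0:ℝ) < 2),
          mul_comm d (Real.logb 2 (T / (c * (p i)^α))),
          Real.rpow_mul (by norm_num : (0:ℝ) ≤ 2), h2x i hi]
      have e2 : (T/(c*(p i)^α))^d = (T/c)^d * ((p i)^α)^(-d) := by
        rw [show T/(c*(p i)^α) = (T/c) * ((p i)^α)⁻¹ by field_simp,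
          Real.mul_rpow (by positivity) (by positivity),
          ← Real.rpow_neg_one ((p i)^α), ← Real.rpow_mul hpa.le]
        ring_nf
      have e3 : p i * ((p i)^α)^(-d) = (p i)^α := by
        rw [← Real.rpow_mul (hp i).le]
        nth_rewrite 1 [← Real.rpow_one (p i)]
        rw [← Real.rpow_add (hp i)]
        congr 1
        linear_combination (-1 : ℝ) * hαd
      calc p i * (2:ℝ)^(d * (Real.logb 2 (T / (c * (p i)^α)) + 1))
          = p i * ((T/c)^d * ((p i)^α)^(-d) * (2:ℝ)^d) := by rw [e1, e2]
        _ = (2:ℝ)^d * (T/c)^d * (p i * ((p i)^α)^(-d)) := by ring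
        _ = (2:ℝ)^d * (T/c)^d * (p i)^α := by rw [e3]
    have hsum_id : ∑ i ∈ Finset.univ.erase j, (2:ℝ)^d * (T/c)^d * (p i)^α
        = (2:ℝ)^d * ((T/c)^d * T) := by
      rw [← Finset.mul_sum, ← hT_def]
      ring
    have hGsplit2 : (∑ i, p i * (2:ℝ)^(d*(l i:ℝ)))
        = p j * (2:ℝ)^(d*(lam:ℝ)) + ∑ i ∈ Finset.univ.erase j, p i * (2:ℝ)^(d*(l i:ℝ)) := by
      have hsplit := (Finset.add_sum_erase Finset.univ
        (fun i => p i * (2:ℝ)^(d*(l i:ℝ))) (Finset.mem_univ j)).symm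
      try simp only [] at hsplit
      rw [hsplit, hlj]
    have hlt : ∀ i ∈ Finset.univ.erase j,
        (l i:ℝ) < Real.logb 2 (T / (c * (p i)^α)) + 1 := by
      intro i hi
      rw [hlne i hi]
      exact Nat.ceil_lt_add_one (hxpos i hi).le
    have hinnerU : 0 < phatj^(1+d) + (2:ℝ)^d * (1-phatj)^(1+d) * ((2:ℝ)^(lam:ℝ)-1)^(-d) := by
      have h1 := Real.rpow_pos_of_pos hq0 (1+d)
      have h2 := Real.rpow_pos_of_pos h1q0 (1+d)
      have h4 := h2μ_gt lam hlam
      have h3 := Real.rpow_pos_of_pos (show (0:ℝ) < (2:ℝ)^(lam:ℝ)-1 by linarith) (-d)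
      have h5 := Real.rpow_pos_of_pos (show (0:ℝ)<2 by norm_num) d
      positivity
    have hX2pos : 0 < (2:ℝ)^(d*(lam:ℝ)) * S^(1+d) *
        (phatj^(1+d) + (2:ℝ)^d * (1-phatj)^(1+d) * ((2:ℝ)^(lam:ℝ)-1)^(-d)) := by
      have h1 := Real.rpow_pos_of_pos (show (0:ℝ)<2 by norm_num) (d*(lam:ℝ))
      have hSp := Real.rpow_pos_of_pos hS0 (1+d)
      positivity
    have hlogX2 : Real.logb 2 ((2:ℝ)^(d*(lam:ℝ)) * S^(1+d) *
          (phatj^(1+d) + (2:ℝ)^d * (1-phatj)^(1+d) * ((2:ℝ)^(lam:ℝ)-1)^(-d)))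
        = d*(lam:ℝ) + (1+d) * Real.logb 2 S +
          Real.logb 2 (phatj^(1+d) + (2:ℝ)^d * (1-phatj)^(1+d) * ((2:ℝ)^(lam:ℝ)-1)^(-d)) := by
      rw [Real.logb_mul (by positivity) (ne_of_gt hinnerU),
        Real.logb_mul (by positivity) (by positivity),
        Real.logb_rpow (by norm_num : (0:ℝ)<2) (by norm_num : (2:ℝ)≠1),
        Real.logb_rpow_eq_mul_logb_of_pos hS0]
    have hXlt : (1/d) * Real.logb 2 (∑ i, p i * (2:ℝ)^(d*(l i:ℝ)))
        < (1/d) * Real.logb 2 ((2:ℝ)^(d*(lam:ℝ)) * S^(1+d) *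
            (phatj^(1+d) + (2:ℝ)^d * (1-phatj)^(1+d) * ((2:ℝ)^(lam:ℝ)-1)^(-d))) := by
      rcases hd0.lt_or_gt with hdn | hdp
      · have hWgt : ∑ i ∈ Finset.univ.erase j, (2:ℝ)^d * (T/c)^d * (p i)^α
            < ∑ i ∈ Finset.univ.erase j, p i * (2:ℝ)^(d*(l i:ℝ)) := by
          apply Finset.sum_lt_sum_of_nonempty herase_ne
          intro i hi
          rw [← hxid i hi]
          apply mul_lt_mul_of_pos_left _ (hp i)
          exact Real.rpow_lt_rpow_of_exponent_lt one_lt_two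
            (mul_lt_mul_of_neg_left (hlt i hi) hdn)
        have hGgt : (2:ℝ)^(d*(lam:ℝ)) * S^(1+d) *
              (phatj^(1+d) + (2:ℝ)^d * (1-phatj)^(1+d) * ((2:ℝ)^(lam:ℝ)-1)^(-d))
            < (∑ i, p i * (2:ℝ)^(d*(l i:ℝ))) := by
          rw [hGsplit2, hM2]
          linarith only [hWgt, hsum_id]
        exact mul_lt_mul_of_neg_left
          (Real.logb_lt_logb one_lt_two hX2pos hGgt) (one_div_neg.mpr hdn)
      · have hWlt : ∑ i ∈ Finset.univ.erase j, p i * (2:ℝ)^(d*(l i:ℝ))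
            < ∑ i ∈ Finset.univ.erase j, (2:ℝ)^d * (T/c)^d * (p i)^α := by
          apply Finset.sum_lt_sum_of_nonempty herase_ne
          intro i hi
          rw [← hxid i hi]
          apply mul_lt_mul_of_pos_left _ (hp i)
          exact Real.rpow_lt_rpow_of_exponent_lt one_lt_two
            (mul_lt_mul_of_pos_left (hlt i hi) hdp)
        have hGlt : (∑ i, p i * (2:ℝ)^(d*(l i:ℝ)))
            < (2:ℝ)^(d*(lam:ℝ)) * S^(1+d) *
              (phatj^(1+d) + (2:ℝ)^d * (1-phatj)^(1+d) * ((2:ℝ)^(lam:ℝ)-1)^(-d)) := by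
          rw [hGsplit2, hM2]
          linarith only [hWlt, hsum_id]
        exact mul_lt_mul_of_pos_left
          (Real.logb_lt_logb one_lt_two (hG0 l) hGlt) (one_div_pos.mpr hdp)
    have hopt : expLengthOpt n a p ≤ expLength n a l p := by
      have hEq : expLengthOpt n a p
          = sInf {r | ∃ l : Fin n → ℕ, IsCode n l ∧ r = expLength n a l p} := rfl
      rw [hEq]
      exact csInf_le hbddE ⟨l, hcode, rfl⟩
    have hfin : expLength n a l p - renyiEntropy n α p
        < (lam:ℝ) + (1/d) * Real.logb 2
            (phatj^(1+d) + (2:ℝ)^d * (1-phatj)^(1+d) * ((2:ℝ)^(lam:ℝ)-1)^(-d)) := by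
      rw [hred l]
      rw [hlogX2] at hXlt
      have hsimp : (1/d) * (d*(lam:ℝ) + (1+d)*Real.logb 2 S +
            Real.logb 2 (phatj^(1+d) + (2:ℝ)^d * (1-phatj)^(1+d) * ((2:ℝ)^(lam:ℝ)-1)^(-d)))
          = (lam:ℝ) + (1/d)*((1+d)*Real.logb 2 S) + (1/d)*Real.logb 2
              (phatj^(1+d) + (2:ℝ)^d * (1-phatj)^(1+d) * ((2:ℝ)^(lam:ℝ)-1)^(-d)) := by
        field_simp
      have hgoal2 : (1/d) * (Real.logb 2 (∑ i, p i * (2:ℝ)^(d*(l i:ℝ))) - (1+d)*Real.logb 2 S)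
          = (1/d)*Real.logb 2 (∑ i, p i * (2:ℝ)^(d*(l i:ℝ)))
            - (1/d)*((1+d)*Real.logb 2 S) := by ring
      rw [hgoal2]
      linarith only [hXlt, hsimp]
    linarith only [hopt, hfin]
end

section
/- Let d > −1 with d ≠ 0 and let λ be a positive integer. Define p_λ = ( 1 + ( (1 − 2^(−d)) / ( (2^λ − 1)^(−d) − (2^λ − 0.5)^(−d) ) )^(1/(1+d)) )^(−1). Then the λ-th and (λ+1)-th terms of the upper-bound minimization coincide at p_λ: λ + (1/d)·log₂( p_λ^(1+d) + 2^d·(1−p_λ)^(1+d)·(2^λ − 1)^(−d) ) = (λ+1) + (1/d)·log₂( p_λ^(1+d) + 2^d·(1−p_λ)^(1+d)·(2^(λ+1) − 1)^(−d) ). Likewise, defining p'_λ = ( 1 + ( (2^d − 1) / ( (2^λ − 1)^(−d) − (2^λ − 0.5)^(−d) ) )^(1/(1+d)) )^(−1), the λ-th and (λ+1)-th terms of the lower-bound minimization coincide at p'_λ: λ + (1/d)·log₂( p'_λ^(1+d) + (1−p'_λ)^(1+d)·(2^λ − 1)^(−d) ) = (λ+1) + (1/d)·log₂( p'_λ^(1+d)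 + (1−p'_λ)^(1+d)·(2^(λ+1) − 1)^(−d) ). -/
open Real

private lemma coincide_gen (d : ℝ) (hd : -1 < d) (hd0 : d ≠ 0) (X k t L : ℝ)
    (hX : 2 ≤ X) (hk : 0 < k) (hkt : k * t = (2 : ℝ) ^ d - 1)
    (p : ℝ)
    (hp : p = (1 + (t / ((X - 1) ^ (-d) - (X - 0.5) ^ (-d))) ^ (1 / (1 + d)))⁻¹) :
    L + (1 / d) * Real.logb 2
        (p ^ (1 + d) + k * (1 - p) ^ (1 + d) * (X - 1) ^ (-d))
      = (L + 1) + (1 / d) * Real.logb 2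
        (p ^ (1 + d) + k * (1 - p) ^ (1 + d) * (2 * X - 1) ^ (-d)) := by
  have h1d : (0 : ℝ) < 1 + d := by linarith
  have hx1 : (0 : ℝ) < X - 1 := by linarith
  have hx2 : (0 : ℝ) < X - 0.5 := by norm_num; linarith
  have hx12 : X - 1 < X - 0.5 := by norm_num
  set A : ℝ := (X - 1) ^ (-d) with hA
  set C : ℝ := (X - 0.5) ^ (-d) with hC
  have hApos : 0 < A := rpow_pos_of_pos hx1 _
  have hCpos : 0 < C := rpow_pos_of_pos hx2 _
  have hE : (0 : ℝ) < (2 : ℝ) ^ d := rpow_pos_of_pos two_pos _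
  -- sign analysis: s := t / (A - C) > 0
  have hs : 0 < t / (A - C) := by
    rcases lt_or_gt_of_ne hd0 with hdneg | hdpos
    · -- d < 0 : numerator and denominator both negative
      have ht : t < 0 := by
        have h2d : (2 : ℝ) ^ d < 1 := rpow_lt_one_of_one_lt_of_neg one_lt_two hdneg
        nlinarith
      have hAC : A < C := by
        rw [hA, hC]
        exact rpow_lt_rpow hx1.le hx12 (by linarith)
      exact div_pos_of_neg_of_neg ht (by linarith)
    · -- d > 0
      have ht : 0 < t := by
        have h2d : (1 : ℝ) < (2 : ℝ) ^ d :=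
          one_lt_rpow_iff_of_pos two_pos |>.2 (Or.inl ⟨one_lt_two, hdpos⟩)
        nlinarith
      have hAC : C < A := by
        rw [hA, hC]
        have := rpow_lt_rpow hx1.le hx12 hdpos
        rw [Real.rpow_neg hx1.le, Real.rpow_neg hx2.le]
        exact inv_strictAnti₀ (rpow_pos_of_pos hx1 _) this
      exact div_pos ht (by linarith)
  set s : ℝ := t / (A - C) with hsdef
  have hACne : A - C ≠ 0 := by
    intro h; rw [hsdef, h, div_zero] at hs; exact lt_irrefl 0 hs
  have hsAC : s * (A - C) = t := div_mul_cancel₀ t hACne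
  set r : ℝ := s ^ (1 / (1 + d)) with hr
  have hrpos : 0 < r := rpow_pos_of_pos hs _
  have hppos : 0 < p := by rw [hp]; positivity
  have hplt : p < 1 := by
    rw [hp]
    rw [inv_lt_one_iff₀]
    right; linarith
  have h1p : 1 - p = r * p := by
    rw [hp]
    field_simp
    ring
  -- key power identity
  have hQ : (1 - p) ^ (1 + d) = s * p ^ (1 + d) := by
    rw [h1p, Real.mul_rpow hrpos.le hppos.le, hr,
      ← Real.rpow_mul hs.le, one_div, inv_mul_cancel₀ h1d.ne', Real.rpow_one]
  set P : ℝ := p ^ (1 + d) with hP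
  set Q : ℝ := (1 - p) ^ (1 + d) with hQdef
  have hPpos : 0 < P := rpow_pos_of_pos hppos _
  have hQpos : 0 < Q := rpow_pos_of_pos (by linarith) _
  -- B = (2X-1)^(-d) = 2^(-d) * C
  have hB : (2 * X - 1) ^ (-d) = (2 : ℝ) ^ (-d) * C := by
    rw [hC]
    have : (2 : ℝ) * X - 1 = 2 * (X - 0.5) := by ring
    rw [this, Real.mul_rpow (by norm_num) hx2.le]
  have hEinv : (2 : ℝ) ^ (-d) = ((2 : ℝ) ^ d)⁻¹ := by
    rw [Real.rpow_neg (by norm_num)]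
  have hEE : (2 : ℝ) ^ d * ((2 : ℝ) ^ d)⁻¹ = 1 := mul_inv_cancel₀ hE.ne'
  -- the main multiplicative identity
  have hmain : P + k * Q * A = (2 : ℝ) ^ d * (P + k * Q * ((2 * X - 1) ^ (-d))) := by
    rw [hB, hEinv]
    linear_combination (k * (A - C)) * hQ + (k * P) * hsAC + P * hkt
      - (k * Q * C) * hEE
  -- positivity of both log arguments
  have hL2pos : 0 < P + k * Q * ((2 * X - 1) ^ (-d)) := by
    have : (0 : ℝ) < (2 * X - 1) ^ (-d) := rpow_pos_of_pos (by linarith) _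
    positivity
  have hL1pos : 0 < P + k * Q * A := by positivity
  rw [hmain, Real.logb_mul hE.ne' hL2pos.ne',
    Real.logb_rpow (b := 2) (by norm_num) (by norm_num)]
  field_simp
  ring

theorem stmt_19 (d : ℝ) (hd : -1 < d) (hd0 : d ≠ 0) (lam : ℕ) (hlam : 1 ≤ lam) :
    (let plam : ℝ := (1 + ((1 - (2 : ℝ) ^ (-d)) /
        (((2 : ℝ) ^ (lam : ℝ) - 1) ^ (-d) - ((2 : ℝ) ^ (lam : ℝ) - 0.5) ^ (-d))) ^
          (1 / (1 + d)))⁻¹;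
      (lam : ℝ) + (1 / d) * Real.logb 2
          (plam ^ (1 + d) +
            (2 : ℝ) ^ d * (1 - plam) ^ (1 + d) * ((2 : ℝ) ^ (lam : ℝ) - 1) ^ (-d))
        = ((lam : ℝ) + 1) + (1 / d) * Real.logb 2
          (plam ^ (1 + d) +
            (2 : ℝ) ^ d * (1 - plam) ^ (1 + d) * ((2 : ℝ) ^ ((lam : ℝ) + 1) - 1) ^ (-d))) ∧
    (let plam' : ℝ := (1 + (((2 : ℝ) ^ d - 1) /
        (((2 : ℝ) ^ (lam : ℝ) - 1) ^ (-d) - ((2 : ℝ) ^ (lam : ℝ) - 0.5) ^ (-d))) ^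
          (1 / (1 + d)))⁻¹;
      (lam : ℝ) + (1 / d) * Real.logb 2
          (plam' ^ (1 + d) + (1 - plam') ^ (1 + d) * ((2 : ℝ) ^ (lam : ℝ) - 1) ^ (-d))
        = ((lam : ℝ) + 1) + (1 / d) * Real.logb 2
          (plam' ^ (1 + d) +
            (1 - plam') ^ (1 + d) * ((2 : ℝ) ^ ((lam : ℝ) + 1) - 1) ^ (-d))) := by
  have hX2 : (2 : ℝ) ≤ (2 : ℝ) ^ (lam : ℝ) := by
    calc (2 : ℝ) = 2 ^ (1 : ℝ) := (Real.rpow_one 2).symm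
    _ ≤ 2 ^ (lam : ℝ) :=
        Real.rpow_le_rpow_of_exponent_le one_le_two (by exact_mod_cast hlam)
  have hrw : (2 : ℝ) ^ ((lam : ℝ) + 1) - 1 = 2 * (2 : ℝ) ^ (lam : ℝ) - 1 := by
    rw [Real.rpow_add two_pos, Real.rpow_one]; ring
  have hE : (0 : ℝ) < (2 : ℝ) ^ d := rpow_pos_of_pos two_pos _
  constructor
  · intro plam
    have hkt1 : (2 : ℝ) ^ d * (1 - (2 : ℝ) ^ (-d)) = (2 : ℝ) ^ d - 1 := by
      rw [Real.rpow_neg (by norm_num : (0:ℝ) ≤ 2)]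
      field_simp
    have h := coincide_gen d hd hd0 ((2 : ℝ) ^ (lam : ℝ)) ((2 : ℝ) ^ d)
      (1 - (2 : ℝ) ^ (-d)) (lam : ℝ) hX2 hE hkt1 _ rfl
    rw [hrw]
    exact h
  · intro plam'
    have hkt2 : (1 : ℝ) * ((2 : ℝ) ^ d - 1) = (2 : ℝ) ^ d - 1 := one_mul _
    have h := coincide_gen d hd hd0 ((2 : ℝ) ^ (lam : ℝ)) 1
      ((2 : ℝ) ^ d - 1) (lam : ℝ) hX2 one_pos hkt2 _ rfl
    simp only [one_mul] at h
    rw [hrw]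
    exact h
end
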